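/- arXiv:2304.11198 — 2 statements merged into one kernel-verified Lean document; each statement's English description precedes it below -/
import Mathlib

section
/- Consider the closed-loop system described in the context. If t* > 0 and θ_i(t) ∈ (−1, 1) for all t ∈ [0, t*) and all i ∈ {1,…,n}, then each of the functions t ↦ υ_i(t), t ↦ z_i(t), t ↦ ξ_i(t), t ↦ f_i(ξ̄_i(t)), t ↦ g_i(ξ̄_i(t)), t ↦ ż_i(t), t ↦ θ̇_i(t), and t ↦ υ̇_i(t), for i ∈ {1,…,n}, is bounded on [0, t*). -/
open Real Set

/-- The truncated state vector `ξ̄_i(t) = (ξ_1(t), …, ξ_i(t))` as an element of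
`EuclideanSpace ℝ (Fin i)` (states are indexed `1, …, n`). -/
noncomputable def xibar (ξ : ℕ → ℝ → ℝ) (i : ℕ) (t : ℝ) : EuclideanSpace ℝ (Fin i) :=
  WithLp.toLp 2 (fun j : Fin i => ξ (j.1 + 1) t)

set_option maxHeartbeats 2000000 in
/-- For the closed-loop system (pure-feedback system of order `n ≥ 1`
with Lipschitz-bounded unknown drifts `f i`, bounded control coefficients `g i`,
bounded disturbances `d i`, performance functions `ψ i`, and the recursively
defined backstepping errors `z i`, normalized errors `θ i` and arctan-tan
controller inputs `υ i`, where `υ 0 = y_d`): if `t* > 0` and `θ_i(t) ∈ (−1, 1)`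
for all `t ∈ [0, t*)` and all `i ∈ {1,…,n}`, then each of the functions
`υ_i, z_i, ξ_i, f_i(ξ̄_i), g_i(ξ̄_i), ż_i, θ̇_i, υ̇_i` is bounded on `[0, t*)`. -/
theorem closed_loop_signals_bounded
    (n : ℕ) (hn : 1 ≤ n)
    (k glo ghi dbar p q μ vbar c : ℕ → ℝ)
    (f g : (i : ℕ) → EuclideanSpace ℝ (Fin i) → ℝ)
    (d : ℕ → ℝ → ℝ)
    (yd yd' : ℝ → ℝ) (r₀ : ℝ)
    (ξ ξ' υ z θ ψ : ℕ → ℝ → ℝ)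
    -- assumptions on the unknown system maps
    (hk : ∀ i ∈ Finset.Icc 1 n, 0 ≤ k i)
    (hf : ∀ i ∈ Finset.Icc 1 n, ∀ x : EuclideanSpace ℝ (Fin i), |f i x| ≤ k i * ‖x‖)
    (hglo : ∀ i ∈ Finset.Icc 1 n, 0 ≤ glo i)
    (hgord : ∀ i ∈ Finset.Icc 1 n, glo i ≤ ghi i)
    (hg : ∀ i ∈ Finset.Icc 1 n, ∀ x : EuclideanSpace ℝ (Fin i),
      glo i ≤ g i x ∧ g i x ≤ ghi i)
    (hdbar : ∀ i ∈ Finset.Icc 1 n, 0 ≤ dbar i)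
    (hd : ∀ i ∈ Finset.Icc 1 n, ∀ t : ℝ, 0 ≤ t → |d i t| ≤ dbar i)
    -- the desired output is continuously differentiable and bounded
    (hvbar0 : 0 < vbar 0) (hr₀ : 0 < r₀)
    (hyd : ∀ t : ℝ, 0 ≤ t → HasDerivAt yd (yd' t) t)
    (hyd'cont : ContinuousOn yd' (Ici 0))
    (hydbd : ∀ t : ℝ, 0 ≤ t → |yd t| ≤ vbar 0)
    (hyd'bd : ∀ t : ℝ, 0 ≤ t → |yd' t| ≤ r₀)
    -- performance functions
    (hq : ∀ i ∈ Finset.Icc 1 n, 0 < q i)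
    (hpq : ∀ i ∈ Finset.Icc 1 n, q i ≤ p i)
    (hμ : ∀ i ∈ Finset.Icc 1 n, 0 < μ i)
    (hψ : ∀ i ∈ Finset.Icc 1 n, ∀ t : ℝ, ψ i t = (p i - q i) * Real.exp (-(μ i) * t) + q i)
    -- controller (recursive definition, `υ 0 = y_d`)
    (hvbar : ∀ i ∈ Finset.Icc 1 n, 0 < vbar i)
    (hc : ∀ i ∈ Finset.Icc 1 n, 0 < c i)
    (hυ0 : ∀ t : ℝ, υ 0 t = yd t)
    (hz : ∀ i ∈ Finset.Icc 1 n, ∀ t : ℝ, z i t = ξ i t - υ (i - 1) t)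
    (hθ : ∀ i ∈ Finset.Icc 1 n, ∀ t : ℝ, θ i t = z i t / ψ i t)
    (hυ : ∀ i ∈ Finset.Icc 1 n, ∀ t : ℝ,
      υ i t = -(2 * vbar i / π) * Real.arctan (π / (2 * c i) * Real.tan (π / 2 * θ i t)))
    -- state dynamics: `ξ` is continuously differentiable and satisfies the ODE
    (hξ : ∀ i ∈ Finset.Icc 1 n, ∀ t : ℝ, 0 ≤ t → HasDerivAt (ξ i) (ξ' i t) t)
    (hξ'cont : ∀ i ∈ Finset.Icc 1 n, ContinuousOn (ξ' i) (Ici 0))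
    (hdyn : ∀ i ∈ Finset.Icc 1 (n - 1), ∀ t : ℝ, 0 ≤ t →
      ξ' i t = f i (xibar ξ i t) + g i (xibar ξ i t) * ξ (i + 1) t + d i t)
    (hdynn : ∀ t : ℝ, 0 ≤ t →
      ξ' n t = f n (xibar ξ n t) + g n (xibar ξ n t) * υ n t + d n t)
    -- hypothesis: `θ_i(t) ∈ (−1, 1)` on `[0, t*)`
    (tstar : ℝ) (htstar : 0 < tstar)
    (hθmem : ∀ t ∈ Ico (0 : ℝ) tstar, ∀ i ∈ Finset.Icc 1 n, θ i t ∈ Ioo (-1 : ℝ) 1) :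
    ∀ i ∈ Finset.Icc 1 n, ∃ M : ℝ, ∀ t ∈ Ico (0 : ℝ) tstar,
      |υ i t| ≤ M ∧ |z i t| ≤ M ∧ |ξ i t| ≤ M ∧
      |f i (xibar ξ i t)| ≤ M ∧ |g i (xibar ξ i t)| ≤ M ∧
      |deriv (z i) t| ≤ M ∧ |deriv (θ i) t| ≤ M ∧ |deriv (υ i) t| ≤ M := by
  
  have hπ : (0:ℝ) < π := Real.pi_pos
  have hppos : ∀ j ∈ Finset.Icc 1 n, 0 < p j := fun j hj => lt_of_lt_of_le (hq j hj) (hpq j hj)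
  have hvbar' : ∀ l, l ≤ n → 0 < vbar l := by
    intro l hl
    rcases Nat.eq_zero_or_pos l with h | h
    · subst h; exact hvbar0
    · exact hvbar l (Finset.mem_Icc.2 ⟨h, hl⟩)
  have hψbd : ∀ j ∈ Finset.Icc 1 n, ∀ t : ℝ, 0 ≤ t → q j ≤ ψ j t ∧ ψ j t ≤ p j := by
    intro j hj t ht
    have hqj := hq j hj
    have hpqj := hpq j hj
    have hμj := hμ j hj
    have he1 : Real.exp (-(μ j) * t) ≤ 1 := Real.exp_le_one_iff.2 (by nlinarith)
    have he0 : 0 < Real.exp (-(μ j) * t) := Real.exp_pos _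
    rw [hψ j hj t]
    constructor
    · nlinarith
    · nlinarith
  have hψpos : ∀ j ∈ Finset.Icc 1 n, ∀ t : ℝ, 0 ≤ t → 0 < ψ j t :=
    fun j hj t ht => lt_of_lt_of_le (hq j hj) (hψbd j hj t ht).1
  have hzbd : ∀ j ∈ Finset.Icc 1 n, ∀ t ∈ Ico (0:ℝ) tstar, |z j t| ≤ p j := by
    intro j hj t ht
    have hθt := hθmem t ht j hj
    have hθabs : |θ j t| ≤ 1 := abs_le.2 ⟨hθt.1.le, hθt.2.le⟩
    have hψp := hψpos j hj t ht.1
    have hzeq : z j t = θ j t * ψ j t := by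
      rw [hθ j hj t]; field_simp
    rw [hzeq, abs_mul, abs_of_pos hψp]
    calc |θ j t| * ψ j t ≤ 1 * ψ j t := mul_le_mul_of_nonneg_right hθabs hψp.le
      _ = ψ j t := one_mul _
      _ ≤ p j := (hψbd j hj t ht.1).2
  have hυbd : ∀ j, j ≤ n → ∀ t : ℝ, 0 ≤ t → |υ j t| ≤ vbar j := by
    intro j hj t ht
    rcases Nat.eq_zero_or_pos j with h | h
    · subst h; rw [hυ0]; exact hydbd t ht
    · have hjmem : j ∈ Finset.Icc 1 n := Finset.mem_Icc.2 ⟨h, hj⟩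
      have hvj := hvbar j hjmem
      have h2v : (0:ℝ) < 2 * vbar j / π := div_pos (by linarith) hπ
      rw [hυ j hjmem t, abs_mul, abs_neg, abs_of_pos h2v]
      have harc : |Real.arctan (π / (2 * c j) * Real.tan (π / 2 * θ j t))| ≤ π / 2 :=
        abs_le.2 ⟨(Real.neg_pi_div_two_lt_arctan _).le, (Real.arctan_lt_pi_div_two _).le⟩
      calc 2 * vbar j / π * |Real.arctan (π / (2 * c j) * Real.tan (π / 2 * θ j t))|
          ≤ 2 * vbar j / π * (π / 2) := mul_le_mul_of_nonneg_left harc h2v.le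
        _ = vbar j := by field_simp
  have hξbd : ∀ j ∈ Finset.Icc 1 n, ∀ t ∈ Ico (0:ℝ) tstar, |ξ j t| ≤ p j + vbar (j - 1) := by
    intro j hj t ht
    have h1 : ξ j t = z j t + υ (j - 1) t := by rw [hz j hj t]; ring
    rw [h1]
    exact (abs_add_le _ _).trans (add_le_add (hzbd j hj t ht)
      (hυbd (j - 1) (le_trans (Nat.sub_le _ _) (Finset.mem_Icc.1 hj).2) t ht.1))
  have hXbd : ∀ j ∈ Finset.Icc 1 n, ∀ t ∈ Ico (0:ℝ) tstar,
      ‖xibar ξ j t‖ ≤ ∑ l ∈ Finset.range j, (p (l + 1) + vbar l) := by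
    intro j hj t ht
    have hjn := (Finset.mem_Icc.1 hj).2
    have h1 : ‖xibar ξ j t‖ ≤ ∑ l : Fin j, |ξ (l.1 + 1) t| := by
      rw [EuclideanSpace.norm_eq]
      have h2 : ∑ l : Fin j, ‖xibar ξ j t l‖ ^ 2 ≤ (∑ l : Fin j, |ξ (l.1 + 1) t|) ^ 2 := by
        have h3 := Finset.sum_sq_le_sq_sum_of_nonneg
          (s := (Finset.univ : Finset (Fin j))) (f := fun l : Fin j => |ξ (l.1 + 1) t|)
          (fun l _ => abs_nonneg _)
        simpa [xibar, Real.norm_eq_abs] using h3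
      calc Real.sqrt (∑ l : Fin j, ‖xibar ξ j t l‖ ^ 2)
          ≤ Real.sqrt ((∑ l : Fin j, |ξ (l.1 + 1) t|) ^ 2) := Real.sqrt_le_sqrt h2
        _ = abs (∑ l : Fin j, |ξ (l.1 + 1) t|) := Real.sqrt_sq_eq_abs _
        _ = ∑ l : Fin j, |ξ (l.1 + 1) t| :=
            abs_of_nonneg (Finset.sum_nonneg fun _ _ => abs_nonneg _)
    refine h1.trans ?_
    rw [Fin.sum_univ_eq_sum_range (fun l => |ξ (l + 1) t|)]
    refine Finset.sum_le_sum fun l hl => ?_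
    have hlj : l < j := Finset.mem_range.1 hl
    have hmem : l + 1 ∈ Finset.Icc 1 n := Finset.mem_Icc.2 ⟨Nat.le_add_left _ _, by omega⟩
    simpa using hξbd (l + 1) hmem t ht
  have hXpos : ∀ j, j ≤ n → 0 ≤ ∑ l ∈ Finset.range j, (p (l + 1) + vbar l) := by
    intro j hj
    refine Finset.sum_nonneg fun l hl => ?_
    have hlj := Finset.mem_range.1 hl
    have hp := hppos (l + 1) (Finset.mem_Icc.2 ⟨Nat.le_add_left _ _, by omega⟩)
    have hv := hvbar' l (by omega)
    linarith
  have hghi : ∀ j ∈ Finset.Icc 1 n, 0 ≤ ghi j := fun j hj => le_trans (hglo j hj) (hgord j hj)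
  have hgabs : ∀ j ∈ Finset.Icc 1 n, ∀ x, |g j x| ≤ ghi j := by
    intro j hj x
    have h1 := hg j hj x
    have h0 := hglo j hj
    have h2 := hghi j hj
    exact abs_le.2 ⟨by linarith, h1.2⟩
  have hfabs : ∀ j ∈ Finset.Icc 1 n, ∀ t ∈ Ico (0:ℝ) tstar,
      |f j (xibar ξ j t)| ≤ k j * ∑ l ∈ Finset.range j, (p (l + 1) + vbar l) :=
    fun j hj t ht => (hf j hj _).trans (mul_le_mul_of_nonneg_left (hXbd j hj t ht) (hk j hj))
  have hξ'bd : ∀ j ∈ Finset.Icc 1 n, ∀ t ∈ Ico (0:ℝ) tstar,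
      |ξ' j t| ≤ k j * (∑ l ∈ Finset.range j, (p (l + 1) + vbar l)) +
        ghi j * max (p (j + 1) + vbar j) (vbar n) + dbar j := by
    intro j hj t ht
    have hjn := (Finset.mem_Icc.1 hj).2
    have hj1 := (Finset.mem_Icc.1 hj).1
    have hgj := hgabs j hj (xibar ξ j t)
    have hfj := hfabs j hj t ht
    have hdj := hd j hj t ht.1
    by_cases hje : j = n
    · subst hje
      rw [hdynn t ht.1]
      have hmid : |g j (xibar ξ j t) * υ j t| ≤ ghi j * max (p (j + 1) + vbar j) (vbar j) := by
        rw [abs_mul]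
        exact mul_le_mul hgj ((hυbd j le_rfl t ht.1).trans (le_max_right _ _))
          (abs_nonneg _) (hghi j hj)
      refine le_trans (abs_add_le _ _) ?_
      refine le_trans (add_le_add_left (abs_add_le _ _) _) ?_
      linarith
    · have hjmem : j ∈ Finset.Icc 1 (n - 1) := Finset.mem_Icc.2 ⟨hj1, by omega⟩
      rw [hdyn j hjmem t ht.1]
      have hξ1 : |ξ (j + 1) t| ≤ p (j + 1) + vbar j := by
        have hmem : j + 1 ∈ Finset.Icc 1 n := Finset.mem_Icc.2 ⟨by omega, by omega⟩
        simpa using hξbd (j + 1) hmem t ht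
      have hmid : |g j (xibar ξ j t) * ξ (j + 1) t| ≤
          ghi j * max (p (j + 1) + vbar j) (vbar n) := by
        rw [abs_mul]
        exact mul_le_mul hgj (hξ1.trans (le_max_left _ _)) (abs_nonneg _) (hghi j hj)
      refine le_trans (abs_add_le _ _) ?_
      refine le_trans (add_le_add_left (abs_add_le _ _) _) ?_
      linarith
  -- derivative bounds, by induction along the backstepping recursion
  have key : ∀ j, j ≤ n → ∃ M : ℝ, 0 ≤ M ∧ ∀ t ∈ Ico (0:ℝ) tstar,
      (∃ u', HasDerivAt (υ j) u' t ∧ |u'| ≤ M) ∧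
      (1 ≤ j → ∃ w x, HasDerivAt (z j) w t ∧ |w| ≤ M ∧ HasDerivAt (θ j) x t ∧ |x| ≤ M) := by
    intro j
    induction j with
    | zero =>
      intro _
      refine ⟨r₀, hr₀.le, fun t ht => ⟨⟨yd' t, ?_, hyd'bd t ht.1⟩,
        fun h => absurd h (by norm_num)⟩⟩
      have h0 : υ 0 = yd := funext hυ0
      rw [h0]
      exact hyd t ht.1
    | succ m ih =>
      intro hm
      obtain ⟨M, hM0, hMt⟩ := ih (by omega)
      have hi : m + 1 ∈ Finset.Icc 1 n := Finset.mem_Icc.2 ⟨by omega, hm⟩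
      have hqi := hq (m + 1) hi
      have hpi := hppos (m + 1) hi
      have hμi := hμ (m + 1) hi
      have hpqi := hpq (m + 1) hi
      have hci := hc (m + 1) hi
      have hvi := hvbar (m + 1) hi
      set X := ∑ l ∈ Finset.range (m + 1), (p (l + 1) + vbar l) with hXdef
      set Dz := k (m + 1) * X + ghi (m + 1) * max (p (m + 1 + 1) + vbar (m + 1)) (vbar n) +
        dbar (m + 1) + M with hDzdef
      have hDz0 : 0 ≤ Dz := by
        have h1 := hXpos (m + 1) hm
        have h2 := hghi (m + 1) hi
        have h3 := hk (m + 1) hi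
        have h4 := hdbar (m + 1) hi
        have h5 : 0 < vbar n := hvbar' n le_rfl
        have h6 : vbar n ≤ max (p (m + 1 + 1) + vbar (m + 1)) (vbar n) := le_max_right _ _
        have h7 : 0 ≤ k (m + 1) * X := mul_nonneg h3 h1
        have h8 : 0 ≤ ghi (m + 1) * max (p (m + 1 + 1) + vbar (m + 1)) (vbar n) :=
          mul_nonneg h2 (by linarith)
        rw [hDzdef]; linarith
      set Dθ := (Dz * p (m + 1) + p (m + 1) * (μ (m + 1) * (p (m + 1) - q (m + 1)))) /
        q (m + 1) ^ 2 with hDθdef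
      have hNB0 : 0 ≤ Dz * p (m + 1) + p (m + 1) * (μ (m + 1) * (p (m + 1) - q (m + 1))) := by
        have h1 : 0 ≤ Dz * p (m + 1) := mul_nonneg hDz0 hpi.le
        have h2 : 0 ≤ p (m + 1) * (μ (m + 1) * (p (m + 1) - q (m + 1))) :=
          mul_nonneg hpi.le (mul_nonneg hμi.le (by linarith))
        linarith
      have hDθ0 : 0 ≤ Dθ := div_nonneg hNB0 (sq_nonneg _)
      set a := π / (2 * c (m + 1)) with hadef
      have ha0 : 0 < a := by rw [hadef]; positivity
      set Du := 2 * vbar (m + 1) / π * ((a + a⁻¹) * (π / 2 * Dθ)) with hDudef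
      refine ⟨max Du (max Dz Dθ), le_trans hDz0 ((le_max_left Dz Dθ).trans (le_max_right Du _)),
        fun t ht => ?_⟩
      obtain ⟨⟨u', hu', hub⟩, -⟩ := hMt t ht
      -- derivative of z (m+1)
      have hzfun : z (m + 1) = fun s => ξ (m + 1) s - υ m s := by
        funext s
        rw [hz (m + 1) hi s]
        norm_num
      have hzder : HasDerivAt (z (m + 1)) (ξ' (m + 1) t - u') t := by
        rw [hzfun]; exact (hξ (m + 1) hi t ht.1).sub hu'
      have hwbd : |ξ' (m + 1) t - u'| ≤ Dz := by
        refine (abs_sub _ _).trans ?_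
        have h1 := hξ'bd (m + 1) hi t ht
        rw [hDzdef, hXdef]; linarith
      -- derivative of ψ (m+1)
      set ψd := (p (m + 1) - q (m + 1)) * (Real.exp (-(μ (m + 1)) * t) * -(μ (m + 1))) with hψddef
      have hψfun : ψ (m + 1) = fun s => (p (m + 1) - q (m + 1)) * Real.exp (-(μ (m + 1)) * s) +
          q (m + 1) := funext (hψ (m + 1) hi)
      have hψder : HasDerivAt (ψ (m + 1)) ψd t := by
        rw [hψfun, hψddef]
        have h0 : HasDerivAt (fun s : ℝ => -(μ (m + 1)) * s) (-(μ (m + 1))) t := by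
          simpa using (hasDerivAt_id t).const_mul (-(μ (m + 1)))
        exact (h0.exp.const_mul (p (m + 1) - q (m + 1))).add_const (q (m + 1))
      have hψdbd : |ψd| ≤ μ (m + 1) * (p (m + 1) - q (m + 1)) := by
        have he1 : Real.exp (-(μ (m + 1)) * t) ≤ 1 := Real.exp_le_one_iff.2 (by nlinarith [ht.1])
        have he0 : 0 < Real.exp (-(μ (m + 1)) * t) := Real.exp_pos _
        rw [hψddef, abs_mul, abs_mul, abs_neg, abs_of_nonneg (by linarith :
          (0:ℝ) ≤ p (m + 1) - q (m + 1)), abs_of_pos he0, abs_of_pos hμi]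
        nlinarith [mul_nonneg (sub_nonneg.2 hpqi) hμi.le,
          mul_le_mul_of_nonneg_left he1 (mul_nonneg (sub_nonneg.2 hpqi) hμi.le)]
      -- derivative of θ (m+1)
      have hψt := hψpos (m + 1) hi t ht.1
      set num := (ξ' (m + 1) t - u') * ψ (m + 1) t - z (m + 1) t * ψd with hnumdef
      have hθfun : θ (m + 1) = fun s => z (m + 1) s / ψ (m + 1) s := funext (hθ (m + 1) hi)
      have hθder : HasDerivAt (θ (m + 1)) (num / ψ (m + 1) t ^ 2) t := by
        rw [hθfun, hnumdef]
        exact hzder.div hψder hψt.ne'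
      have hnum : |num| ≤ Dz * p (m + 1) + p (m + 1) * (μ (m + 1) * (p (m + 1) - q (m + 1))) := by
        rw [hnumdef]
        refine (abs_sub _ _).trans ?_
        rw [abs_mul, abs_mul]
        have h1 : |ξ' (m + 1) t - u'| * |ψ (m + 1) t| ≤ Dz * p (m + 1) :=
          mul_le_mul hwbd (by rw [abs_of_pos hψt]; exact (hψbd (m + 1) hi t ht.1).2)
            (abs_nonneg _) hDz0
        have h2 : |z (m + 1) t| * |ψd| ≤ p (m + 1) * (μ (m + 1) * (p (m + 1) - q (m + 1))) :=
          mul_le_mul (hzbd (m + 1) hi t ht) hψdbd (abs_nonneg _) hpi.le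
        linarith
      have hxbd : |num / ψ (m + 1) t ^ 2| ≤ Dθ := by
        rw [abs_div, abs_of_pos (pow_pos hψt 2), hDθdef]
        refine div_le_div₀ hNB0 hnum (by positivity) ?_
        have h1 := (hψbd (m + 1) hi t ht.1).1
        nlinarith
      -- derivative of υ (m+1)
      have hθt := hθmem t ht (m + 1) hi
      have huIoo : π / 2 * θ (m + 1) t ∈ Ioo (-(π / 2)) (π / 2) := by
        constructor
        · nlinarith [hθt.1]
        · nlinarith [hθt.2]
      have hcosu : 0 < Real.cos (π / 2 * θ (m + 1) t) := Real.cos_pos_of_mem_Ioo huIoo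
      have htander : HasDerivAt (fun s => Real.tan (π / 2 * θ (m + 1) s))
          (1 / Real.cos (π / 2 * θ (m + 1) t) ^ 2 * (π / 2 * (num / ψ (m + 1) t ^ 2))) t := by
        have h1 := (Real.hasDerivAt_tan hcosu.ne').comp t (hθder.const_mul (π / 2))
        simpa [Function.comp_def] using h1
      have harcder : HasDerivAt (fun s => Real.arctan (a * Real.tan (π / 2 * θ (m + 1) s)))
          (1 / (1 + (a * Real.tan (π / 2 * θ (m + 1) t)) ^ 2) *
            (a * (1 / Real.cos (π / 2 * θ (m + 1) t) ^ 2 * (π / 2 * (num / ψ (m + 1) t ^ 2))))) t := by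
        have h1 := (htander.const_mul a).arctan
        simpa using h1
      have hυfun : υ (m + 1) = fun s => -(2 * vbar (m + 1) / π) *
          Real.arctan (a * Real.tan (π / 2 * θ (m + 1) s)) := by
        funext s
        rw [hυ (m + 1) hi s, hadef]
      have hυder : HasDerivAt (υ (m + 1))
          (-(2 * vbar (m + 1) / π) * (1 / (1 + (a * Real.tan (π / 2 * θ (m + 1) t)) ^ 2) *
            (a * (1 / Real.cos (π / 2 * θ (m + 1) t) ^ 2 * (π / 2 * (num / ψ (m + 1) t ^ 2)))))) t := by
        rw [hυfun]
        exact harcder.const_mul _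
      -- bound on the derivative of υ (m+1)
      set T := Real.tan (π / 2 * θ (m + 1) t) with hTdef
      have hsec : 1 / Real.cos (π / 2 * θ (m + 1) t) ^ 2 = 1 + T ^ 2 := by
        rw [← Real.inv_one_add_tan_sq hcosu.ne', one_div, inv_inv, hTdef]
      rw [hsec] at hυder
      have hfact : 1 / (1 + (a * T) ^ 2) * (a * (1 + T ^ 2)) ≤ a + a⁻¹ := by
        rw [div_mul_eq_mul_div, one_mul, div_le_iff₀ (by positivity), ← sub_nonneg]
        have hid : (a + a⁻¹) * (1 + (a * T) ^ 2) - a * (1 + T ^ 2) = a ^ 3 * T ^ 2 + a⁻¹ := by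
          field_simp
          ring
        rw [hid]
        exact add_nonneg (mul_nonneg (pow_nonneg ha0.le 3) (sq_nonneg T)) (inv_nonneg.2 ha0.le)
      have h2v : (0:ℝ) < 2 * vbar (m + 1) / π := div_pos (by linarith) hπ
      have habs : |-(2 * vbar (m + 1) / π) * (1 / (1 + (a * T) ^ 2) *
            (a * ((1 + T ^ 2) * (π / 2 * (num / ψ (m + 1) t ^ 2)))))| =
          2 * vbar (m + 1) / π * ((1 / (1 + (a * T) ^ 2) * (a * (1 + T ^ 2))) *
            (π / 2 * |num / ψ (m + 1) t ^ 2|)) := by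
        rw [abs_mul, abs_neg, abs_mul, abs_mul, abs_mul, abs_mul,
          abs_of_pos h2v,
          abs_of_pos (show (0:ℝ) < 1 / (1 + (a * T) ^ 2) by positivity),
          abs_of_pos ha0,
          abs_of_nonneg (show (0:ℝ) ≤ 1 + T ^ 2 by positivity),
          abs_of_pos (show (0:ℝ) < π / 2 by positivity)]
        ring
      have hle : 2 * vbar (m + 1) / π * ((1 / (1 + (a * T) ^ 2) * (a * (1 + T ^ 2))) *
            (π / 2 * |num / ψ (m + 1) t ^ 2|)) ≤ Du := by
        rw [hDudef]
        have h2 : π / 2 * |num / ψ (m + 1) t ^ 2| ≤ π / 2 * Dθ :=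
          mul_le_mul_of_nonneg_left hxbd (by positivity)
        have h3 : (1 / (1 + (a * T) ^ 2) * (a * (1 + T ^ 2))) * (π / 2 * |num / ψ (m + 1) t ^ 2|) ≤
            (a + a⁻¹) * (π / 2 * Dθ) :=
          mul_le_mul hfact h2 (by positivity)
            (add_nonneg ha0.le (inv_nonneg.2 ha0.le))
        exact mul_le_mul_of_nonneg_left h3 h2v.le
      have hυbd' : |-(2 * vbar (m + 1) / π) * (1 / (1 + (a * T) ^ 2) *
            (a * ((1 + T ^ 2) * (π / 2 * (num / ψ (m + 1) t ^ 2)))))| ≤ Du := habs ▸ hle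
      refine ⟨⟨_, hυder, ?_⟩, fun _ => ⟨_, _, hzder, hwbd.trans ?_, hθder, hxbd.trans ?_⟩⟩
      · exact le_trans hυbd' (le_max_left _ _)
      · exact (le_max_left Dz Dθ).trans (le_max_right Du _)
      · exact (le_max_right Dz Dθ).trans (le_max_right Du _)
  -- assembling the final bounds
  intro i hi
  have hin := (Finset.mem_Icc.1 hi).2
  obtain ⟨M, hM0, hMt⟩ := key i hin
  have hvi := hvbar i hi
  have hpi := hppos i hi
  have hvi1 := hvbar' (i - 1) (by omega)
  have hkX : 0 ≤ k i * ∑ l ∈ Finset.range i, (p (l + 1) + vbar l) :=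
    mul_nonneg (hk i hi) (hXpos i hin)
  have hgi := hghi i hi
  refine ⟨vbar i + p i + (p i + vbar (i - 1)) +
    k i * (∑ l ∈ Finset.range i, (p (l + 1) + vbar l)) + ghi i + M, fun t ht => ?_⟩
  obtain ⟨⟨u', hu', hub⟩, h2⟩ := hMt t ht
  obtain ⟨w, x, hw, hwb, hx, hxb⟩ := h2 (Finset.mem_Icc.1 hi).1
  have e1 : deriv (z i) t = w := hw.deriv
  have e2 : deriv (θ i) t = x := hx.deriv
  have e3 : deriv (υ i) t = u' := hu'.deriv
  refine ⟨?_, ?_, ?_, ?_, ?_, ?_, ?_, ?_⟩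
  · have := hυbd i hin t ht.1; linarith
  · have := hzbd i hi t ht; linarith
  · have := hξbd i hi t ht; linarith
  · have := hfabs i hi t ht; linarith
  · have := hgabs i hi (xibar ξ i t); linarith
  · rw [e1]; linarith
  · rw [e2]; linarith
  · rw [e3]; linarith
end

section
/- Consider the closed-loop system described in the context. If t* > 0, the feasibility conditions φ_i < (ḡ_i + g̲_i)·v̄_i + μ_i·(q_i − p_i) hold for every i ∈ {1,…,n}, and θ_i(t) ∈ (−1, 1) for all t ∈ [0, t*) and all i ∈ {1,…,n}, then the derivatives of the (virtual) control inputs satisfy |υ̇_i(t)| ≤ r_i for all t ∈ [0, t*) and all i ∈ {1,…,n}. -/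
open Real Set

set_option maxHeartbeats 1000000

/-- The vector `δ_i = (p_1 + v̄_0, …, p_i + v̄_{i−1})` in `EuclideanSpace ℝ (Fin i)`. -/
noncomputable def deltaVec (p vbar : ℕ → ℝ) (i : ℕ) : EuclideanSpace ℝ (Fin i) :=
  WithLp.toLp 2 (fun j : Fin i => p (j.1 + 1) + vbar j.1)

lemma aux_ratio (a T : ℝ) (ha : 0 < a) :
    a * (1 + T ^ 2) / (1 + (a * T) ^ 2) ≤ max a (1 / a) := by
  rcases le_total 1 a with h | h
  · apply le_max_iff.mpr; left
    rw [div_le_iff₀ (by positivity)]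
    nlinarith [mul_nonneg (mul_nonneg (mul_nonneg ha.le (sub_nonneg.mpr h)) (sq_nonneg T))
      (by linarith : (0:ℝ) ≤ a + 1)]
  · apply le_max_iff.mpr; right
    rw [div_le_div_iff₀ (by positivity) ha]
    nlinarith [sq_nonneg T, mul_pos ha ha]

/-- For the closed-loop system (pure-feedback system of order `n ≥ 1`
with Lipschitz-bounded unknown drifts `f i`, bounded control coefficients `g i`,
bounded disturbances `d i`, performance functions `ψ i`, and the recursively
defined backstepping errors `z i`, normalized errors `θ i` and arctan-tan
controller inputs `υ i`, where `υ 0 = y_d`, together with the mutually recursive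
feasibility constants `φ i` and `r i` where `r 0 = r₀`): if `t* > 0`, the
feasibility conditions `φ_i < (ḡ_i + g̲_i)·v̄_i + μ_i·(q_i − p_i)` hold for every
`i ∈ {1,…,n}`, and `θ_i(t) ∈ (−1, 1)` for all `t ∈ [0, t*)` and all
`i ∈ {1,…,n}`, then `|υ̇_i(t)| ≤ r_i` for all `t ∈ [0, t*)` and `i ∈ {1,…,n}`. -/
theorem virtual_input_derivative_bounds
    (n : ℕ) (hn : 1 ≤ n)
    (k glo ghi dbar p q μ vbar c : ℕ → ℝ)
    (f g : (i : ℕ) → EuclideanSpace ℝ (Fin i) → ℝ)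
    (d : ℕ → ℝ → ℝ)
    (yd yd' : ℝ → ℝ) (r₀ : ℝ)
    (ξ ξ' υ z θ ψ : ℕ → ℝ → ℝ)
    (φ r : ℕ → ℝ)
    -- assumptions on the unknown system maps
    (hk : ∀ i ∈ Finset.Icc 1 n, 0 ≤ k i)
    (hf : ∀ i ∈ Finset.Icc 1 n, ∀ x : EuclideanSpace ℝ (Fin i), |f i x| ≤ k i * ‖x‖)
    (hglo : ∀ i ∈ Finset.Icc 1 n, 0 ≤ glo i)
    (hgord : ∀ i ∈ Finset.Icc 1 n, glo i ≤ ghi i)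
    (hg : ∀ i ∈ Finset.Icc 1 n, ∀ x : EuclideanSpace ℝ (Fin i),
      glo i ≤ g i x ∧ g i x ≤ ghi i)
    (hdbar : ∀ i ∈ Finset.Icc 1 n, 0 ≤ dbar i)
    (hd : ∀ i ∈ Finset.Icc 1 n, ∀ t : ℝ, 0 ≤ t → |d i t| ≤ dbar i)
    -- the desired output is continuously differentiable and bounded
    (hvbar0 : 0 < vbar 0) (hr₀ : 0 < r₀)
    (hyd : ∀ t : ℝ, 0 ≤ t → HasDerivAt yd (yd' t) t)
    (hyd'cont : ContinuousOn yd' (Ici 0))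
    (hydbd : ∀ t : ℝ, 0 ≤ t → |yd t| ≤ vbar 0)
    (hyd'bd : ∀ t : ℝ, 0 ≤ t → |yd' t| ≤ r₀)
    -- performance functions
    (hq : ∀ i ∈ Finset.Icc 1 n, 0 < q i)
    (hpq : ∀ i ∈ Finset.Icc 1 n, q i ≤ p i)
    (hμ : ∀ i ∈ Finset.Icc 1 n, 0 < μ i)
    (hψ : ∀ i ∈ Finset.Icc 1 n, ∀ t : ℝ, ψ i t = (p i - q i) * Real.exp (-(μ i) * t) + q i)
    -- controller (recursive definition, `υ 0 = y_d`)
    (hvbar : ∀ i ∈ Finset.Icc 1 n, 0 < vbar i)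
    (hc : ∀ i ∈ Finset.Icc 1 n, 0 < c i)
    (hυ0 : ∀ t : ℝ, υ 0 t = yd t)
    (hz : ∀ i ∈ Finset.Icc 1 n, ∀ t : ℝ, z i t = ξ i t - υ (i - 1) t)
    (hθ : ∀ i ∈ Finset.Icc 1 n, ∀ t : ℝ, θ i t = z i t / ψ i t)
    (hυ : ∀ i ∈ Finset.Icc 1 n, ∀ t : ℝ,
      υ i t = -(2 * vbar i / π) * Real.arctan (π / (2 * c i) * Real.tan (π / 2 * θ i t)))
    -- state dynamics: `ξ` is continuously differentiable and satisfies the ODE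
    (hξ : ∀ i ∈ Finset.Icc 1 n, ∀ t : ℝ, 0 ≤ t → HasDerivAt (ξ i) (ξ' i t) t)
    (hξ'cont : ∀ i ∈ Finset.Icc 1 n, ContinuousOn (ξ' i) (Ici 0))
    (hdyn : ∀ i ∈ Finset.Icc 1 (n - 1), ∀ t : ℝ, 0 ≤ t →
      ξ' i t = f i (xibar ξ i t) + g i (xibar ξ i t) * ξ (i + 1) t + d i t)
    (hdynn : ∀ t : ℝ, 0 ≤ t →
      ξ' n t = f n (xibar ξ n t) + g n (xibar ξ n t) * υ n t + d n t)
    -- feasibility constants `φ i` and `r i` (with `r 0 = r₀`)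
    (hr0 : r 0 = r₀)
    (hφ : ∀ i ∈ Finset.Icc 1 (n - 1),
      φ i = k i * ‖deltaVec p vbar i‖ + dbar i + ghi i * p (i + 1) + ghi i * vbar i + r (i - 1))
    (hφn : φ n = k n * ‖deltaVec p vbar n‖ + dbar n + ghi n * vbar n + r (n - 1))
    (hr : ∀ i ∈ Finset.Icc 1 n,
      r i = (φ i / q i + μ i * (p i - q i) / p i) *
        max (π * vbar i / (2 * c i)) (2 * vbar i * c i / π))
    -- feasibility conditions
    (hfeas : ∀ i ∈ Finset.Icc 1 n, φ i < (ghi i + glo i) * vbar i + μ i * (q i - p i))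
    -- hypothesis: `θ_i(t) ∈ (−1, 1)` on `[0, t*)`
    (tstar : ℝ) (htstar : 0 < tstar)
    (hθmem : ∀ t ∈ Ico (0 : ℝ) tstar, ∀ i ∈ Finset.Icc 1 n, θ i t ∈ Ioo (-1 : ℝ) 1) :
    ∀ t ∈ Ico (0 : ℝ) tstar, ∀ i ∈ Finset.Icc 1 n, |deriv (υ i) t| ≤ r i := by
  have hπ : (0:ℝ) < π := Real.pi_pos
  -- bound on the controller signals
  have hub : ∀ j, j ≤ n → ∀ t : ℝ, 0 ≤ t → |υ j t| ≤ vbar j := by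
    intro j hj t htt
    rcases Nat.eq_zero_or_pos j with h0 | h1
    · subst h0; rw [hυ0 t]; exact hydbd t htt
    · have hjm : j ∈ Finset.Icc 1 n := Finset.mem_Icc.mpr ⟨h1, hj⟩
      have hb := hvbar j hjm
      rw [hυ j hjm t, abs_mul]
      have ha : |Real.arctan (π / (2 * c j) * Real.tan (π / 2 * θ j t))| ≤ π / 2 :=
        abs_le.mpr ⟨(Real.neg_pi_div_two_lt_arctan _).le, (Real.arctan_lt_pi_div_two _).le⟩
      have h2 : |-(2 * vbar j / π)| = 2 * vbar j / π := by
        rw [abs_neg, abs_of_pos]; positivity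
      rw [h2]
      calc 2 * vbar j / π * |Real.arctan (π / (2 * c j) * Real.tan (π / 2 * θ j t))|
          ≤ 2 * vbar j / π * (π / 2) := by
            exact mul_le_mul_of_nonneg_left ha (by positivity)
        _ = vbar j := by field_simp
  -- facts about the performance functions
  have hψfacts : ∀ i ∈ Finset.Icc 1 n, ∀ t : ℝ, 0 ≤ t →
      q i ≤ ψ i t ∧ ψ i t ≤ p i ∧ p i * Real.exp (-μ i * t) ≤ ψ i t := by
    intro i hi t htt
    have hqi := hq i hi; have hpqi := hpq i hi; have hμi := hμ i hi
    have hs1 : Real.exp (-μ i * t) ≤ 1 := Real.exp_le_one_iff.mpr (by nlinarith)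
    have hs0 : 0 < Real.exp (-μ i * t) := Real.exp_pos _
    rw [hψ i hi t]
    refine ⟨by nlinarith, by nlinarith, by nlinarith⟩
  have hψder : ∀ i ∈ Finset.Icc 1 n, ∀ t : ℝ,
      HasDerivAt (ψ i) ((p i - q i) * (Real.exp (-μ i * t) * (-μ i))) t := by
    intro i hi t
    have hfun : ψ i = fun s => (p i - q i) * Real.exp (-μ i * s) + q i := funext (hψ i hi)
    rw [hfun]
    have h1 : HasDerivAt (fun s : ℝ => -μ i * s) (-μ i) t := by
      simpa using (hasDerivAt_id t).const_mul (-μ i)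
    exact (((Real.hasDerivAt_exp (-μ i * t)).comp t h1).const_mul (p i - q i)).add_const (q i)
  -- bound on the errors
  have hzb : ∀ i ∈ Finset.Icc 1 n, ∀ t ∈ Ico (0:ℝ) tstar, |z i t| ≤ ψ i t := by
    intro i hi t htt
    have hθt := hθmem t htt i hi
    have hψt := (hψfacts i hi t htt.1).1
    have hψpos : 0 < ψ i t := lt_of_lt_of_le (hq i hi) hψt
    have hzeq : z i t = θ i t * ψ i t := by
      have := hθ i hi t
      field_simp at this
      linarith [this]
    rw [hzeq, abs_mul, abs_of_pos hψpos]
    have hθb : |θ i t| ≤ 1 := abs_le.mpr ⟨hθt.1.le, hθt.2.le⟩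
    nlinarith [abs_nonneg (θ i t)]
  -- bound on the states
  have hxib : ∀ i ∈ Finset.Icc 1 n, ∀ t ∈ Ico (0:ℝ) tstar, |ξ i t| ≤ p i + vbar (i - 1) := by
    intro i hi t htt
    have h1 := hzb i hi t htt
    have h2 := hub (i - 1) (le_trans (Nat.sub_le i 1) (Finset.mem_Icc.mp hi).2) t htt.1
    have h3 := (hψfacts i hi t htt.1).2.1
    have hze : ξ i t = z i t + υ (i - 1) t := by rw [hz i hi t]; ring
    rw [hze]
    calc |z i t + υ (i - 1) t| ≤ |z i t| + |υ (i - 1) t| := abs_add_le _ _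
      _ ≤ p i + vbar (i - 1) := add_le_add (h1.trans h3) h2
  -- norm bound on the truncated state vectors
  have hnormb : ∀ i ∈ Finset.Icc 1 n, ∀ t ∈ Ico (0:ℝ) tstar,
      ‖xibar ξ i t‖ ≤ ‖deltaVec p vbar i‖ := by
    intro i hi t htt
    rw [EuclideanSpace.norm_eq, EuclideanSpace.norm_eq]
    apply Real.sqrt_le_sqrt
    apply Finset.sum_le_sum
    intro j _
    have hjm : j.1 + 1 ∈ Finset.Icc 1 n := by
      have hj2 := j.2
      have := (Finset.mem_Icc.mp hi).2
      exact Finset.mem_Icc.mpr ⟨by omega, by omega⟩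
    have hb := hxib (j.1 + 1) hjm t htt
    have hb' : |ξ (j.1 + 1) t| ≤ p (j.1 + 1) + vbar j.1 := by simpa using hb
    show ‖xibar ξ i t j‖ ^ 2 ≤ ‖deltaVec p vbar i j‖ ^ 2
    simp only [xibar, deltaVec, Real.norm_eq_abs]
    have : |ξ (j.1 + 1) t| ≤ |p (j.1 + 1) + vbar j.1| := hb'.trans (le_abs_self _)
    exact pow_le_pow_left₀ (abs_nonneg _) this 2
  -- main induction
  have key : ∀ i, i ≤ n → ∀ t ∈ Ico (0:ℝ) tstar, ∃ v, HasDerivAt (υ i) v t ∧ |v| ≤ r i := by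
    intro i
    induction i with
    | zero =>
      intro _ t htt
      refine ⟨yd' t, ?_, ?_⟩
      · have hfun : υ 0 = yd := funext hυ0
        rw [hfun]; exact hyd t htt.1
      · rw [hr0]; exact hyd'bd t htt.1
    | succ i ih =>
      intro hin t htt
      have hmm : i + 1 ∈ Finset.Icc 1 n := Finset.mem_Icc.mpr ⟨by omega, hin⟩
      obtain ⟨w, hw, hwb⟩ := ih (by omega) t htt
      set m := i + 1 with hmdef
      have hm1i : m - 1 = i := by omega
      -- bound the state derivative
      have hghi0 : 0 ≤ ghi m := le_trans (hglo m hmm) (hgord m hmm)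
      have hgm := hg m hmm (xibar ξ m t)
      have hfb : |f m (xibar ξ m t)| ≤ k m * ‖deltaVec p vbar m‖ :=
        (hf m hmm _).trans (mul_le_mul_of_nonneg_left (hnormb m hmm t htt) (hk m hmm))
      have hdb := hd m hmm t htt.1
      have hgabs : |g m (xibar ξ m t)| ≤ ghi m := by
        rw [abs_of_nonneg (le_trans (hglo m hmm) hgm.1)]; exact hgm.2
      have hξ'b : |ξ' m t| + r i ≤ φ m := by
        rcases Nat.lt_or_ge m n with hlt | hge
        · have hm1 : m ∈ Finset.Icc 1 (n - 1) := Finset.mem_Icc.mpr ⟨by omega, by omega⟩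
          have hdm := hdyn m hm1 t htt.1
          have hm1n : m + 1 ∈ Finset.Icc 1 n := Finset.mem_Icc.mpr ⟨by omega, by omega⟩
          have hxb : |ξ (m + 1) t| ≤ p (m + 1) + vbar m := by
            simpa using hxib (m + 1) hm1n t htt
          have hgmul : |g m (xibar ξ m t) * ξ (m + 1) t| ≤ ghi m * (p (m + 1) + vbar m) := by
            rw [abs_mul]
            exact mul_le_mul hgabs hxb (abs_nonneg _) hghi0
          have hφm := hφ m hm1
          rw [hm1i] at hφm
          have habs3 : |ξ' m t| ≤ |f m (xibar ξ m t)| + |g m (xibar ξ m t) * ξ (m + 1) t|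
              + |d m t| := by
            rw [hdm]
            exact (abs_add_le _ _).trans (by gcongr; exact abs_add_le _ _)
          nlinarith
        · have hmn : m = n := le_antisymm hin hge
          have hdm : ξ' m t = f m (xibar ξ m t) + g m (xibar ξ m t) * υ m t + d m t := by
            rw [hmn]; exact hdynn t htt.1
          have hxb : |υ m t| ≤ vbar m := hub m hin t htt.1
          have hgmul : |g m (xibar ξ m t) * υ m t| ≤ ghi m * vbar m := by
            rw [abs_mul]
            exact mul_le_mul hgabs hxb (abs_nonneg _) hghi0
          have hφm : φ m = k m * ‖deltaVec p vbar m‖ + dbar m + ghi m * vbar m + r i := by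
            rw [hmn, hφn]
            congr 1
            rw [show n - 1 = i by omega]
          have habs3 : |ξ' m t| ≤ |f m (xibar ξ m t)| + |g m (xibar ξ m t) * υ m t|
              + |d m t| := by
            rw [hdm]
            exact (abs_add_le _ _).trans (by gcongr; exact abs_add_le _ _)
          nlinarith
      -- derivative of the error
      have hzfun : z m = fun s => ξ m s - υ i s := by
        funext s; rw [hz m hmm s, hm1i]
      have hzder : HasDerivAt (z m) (ξ' m t - w) t := by
        rw [hzfun]; exact (hξ m hmm t htt.1).sub hw
      have hznum : |ξ' m t - w| ≤ φ m := by
        calc |ξ' m t - w| ≤ |ξ' m t| + |w| := abs_sub _ _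
          _ ≤ |ξ' m t| + r i := by linarith
          _ ≤ φ m := hξ'b
      have hφ0 : 0 ≤ φ m := le_trans (abs_nonneg _) hznum
      -- derivative of the normalized error
      have hψt := hψfacts m hmm t htt.1
      have hqm := hq m hmm
      have hpm : 0 < p m := lt_of_lt_of_le hqm (hpq m hmm)
      have hμm := hμ m hmm
      have hpqm := hpq m hmm
      have hψpos : 0 < ψ m t := lt_of_lt_of_le hqm hψt.1
      have hθfun : θ m = fun s => z m s / ψ m s := funext (hθ m hmm)
      set dψ := (p m - q m) * (Real.exp (-μ m * t) * (-μ m)) with hdψdef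
      set dθ := ((ξ' m t - w) * ψ m t - z m t * dψ) / (ψ m t) ^ 2 with hdθdef
      have hθder : HasDerivAt (θ m) dθ t := by
        rw [hθfun]; exact hzder.div (hψder m hmm t) hψpos.ne'
      -- bound the derivative of the normalized error
      have hs0 : 0 < Real.exp (-μ m * t) := Real.exp_pos _
      have hX0' : (0:ℝ) ≤ μ m * (p m - q m) := mul_nonneg hμm.le (by linarith)
      have hX0 : (0:ℝ) ≤ μ m * (p m - q m) * Real.exp (-μ m * t) := mul_nonneg hX0' hs0.le
      have hdψabs : |dψ| = μ m * (p m - q m) * Real.exp (-μ m * t) := by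
        rw [hdψdef, abs_mul, abs_mul, abs_neg, abs_of_pos hs0,
          abs_of_nonneg (by linarith : (0:ℝ) ≤ p m - q m), abs_of_pos hμm]
        ring
      have hdθb : |dθ| ≤ φ m / q m + μ m * (p m - q m) / p m := by
        have hnum : |(ξ' m t - w) * ψ m t - z m t * dψ|
            ≤ φ m * ψ m t + μ m * (p m - q m) * Real.exp (-μ m * t) * ψ m t := by
          calc |(ξ' m t - w) * ψ m t - z m t * dψ|
              ≤ |(ξ' m t - w) * ψ m t| + |z m t * dψ| := abs_sub _ _
            _ = |ξ' m t - w| * ψ m t + |z m t| * |dψ| := by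
                rw [abs_mul, abs_mul, abs_of_pos hψpos]
            _ ≤ φ m * ψ m t + ψ m t * (μ m * (p m - q m) * Real.exp (-μ m * t)) := by
                refine add_le_add (mul_le_mul_of_nonneg_right hznum hψpos.le) ?_
                rw [hdψabs]
                exact mul_le_mul_of_nonneg_right (hzb m hmm t htt) hX0
            _ = φ m * ψ m t + μ m * (p m - q m) * Real.exp (-μ m * t) * ψ m t := by ring
        have hA : φ m * ψ m t ≤ φ m / q m * ψ m t ^ 2 := by
          rw [div_mul_eq_mul_div, le_div_iff₀ hqm]
          nlinarith [mul_nonneg hφ0 hψpos.le, hψt.1]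
        have hB : μ m * (p m - q m) * Real.exp (-μ m * t) * ψ m t
            ≤ μ m * (p m - q m) / p m * ψ m t ^ 2 := by
          rw [div_mul_eq_mul_div, le_div_iff₀ hpm]
          nlinarith [mul_nonneg hX0' hψpos.le, hψt.2.2]
        rw [hdθdef, abs_div, abs_of_pos (pow_pos hψpos 2), div_le_iff₀ (by positivity)]
        calc |(ξ' m t - w) * ψ m t - z m t * dψ|
            ≤ φ m * ψ m t + μ m * (p m - q m) * Real.exp (-μ m * t) * ψ m t := hnum
          _ ≤ φ m / q m * ψ m t ^ 2 + μ m * (p m - q m) / p m * ψ m t ^ 2 := add_le_add hA hB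
          _ = (φ m / q m + μ m * (p m - q m) / p m) * ψ m t ^ 2 := by ring
      have hdθb0 : (0:ℝ) ≤ φ m / q m + μ m * (p m - q m) / p m :=
        le_trans (abs_nonneg _) hdθb
      -- the controller derivative
      have hθt := hθmem t htt m hmm
      have hcm := hc m hmm
      have hvm := hvbar m hmm
      have hcos : Real.cos (π / 2 * θ m t) ≠ 0 := by
        apply ne_of_gt
        apply Real.cos_pos_of_mem_Ioo
        constructor <;> nlinarith [hθt.1, hθt.2]
      set T := Real.tan (π / 2 * θ m t) with hTdef
      set a := π / (2 * c m) with hadef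
      have ha0 : 0 < a := by positivity
      have htander : HasDerivAt (fun s => Real.tan (π / 2 * θ m s))
          (1 / Real.cos (π / 2 * θ m t) ^ 2 * (π / 2 * dθ)) t :=
        by have h1 := (Real.hasDerivAt_tan hcos).comp t (hθder.const_mul (π / 2)); exact h1
      have harc : HasDerivAt (fun s => Real.arctan (a * Real.tan (π / 2 * θ m s)))
          (1 / (1 + (a * T) ^ 2) * (a * (1 / Real.cos (π / 2 * θ m t) ^ 2 * (π / 2 * dθ)))) t :=
        by have h1 := (Real.hasDerivAt_arctan (a * T)).comp t (htander.const_mul a); exact h1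
      have hυfun : υ m = fun s => -(2 * vbar m / π) * Real.arctan (a * Real.tan (π / 2 * θ m s)) :=
        funext (hυ m hmm)
      set v := -(2 * vbar m / π) *
        (1 / (1 + (a * T) ^ 2) * (a * (1 / Real.cos (π / 2 * θ m t) ^ 2 * (π / 2 * dθ)))) with hvdef
      have hυder : HasDerivAt (υ m) v t := by
        rw [hυfun]; exact harc.const_mul _
      refine ⟨v, hυder, ?_⟩
      -- bound the controller derivative
      have hC2 : 1 / Real.cos (π / 2 * θ m t) ^ 2 = 1 + T ^ 2 := by
        rw [one_div, ← Real.inv_one_add_tan_sq hcos, inv_inv, hTdef]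
      have hden : (0:ℝ) < 1 + (a * T) ^ 2 := by positivity
      have hveq : v = -((vbar m * (a * (1 + T ^ 2) / (1 + (a * T) ^ 2))) * dθ) := by
        rw [hvdef, hC2]
        field_simp
      have hK0 : (0:ℝ) ≤ vbar m * (a * (1 + T ^ 2) / (1 + (a * T) ^ 2)) := by positivity
      have hKle : vbar m * (a * (1 + T ^ 2) / (1 + (a * T) ^ 2))
          ≤ max (π * vbar m / (2 * c m)) (2 * vbar m * c m / π) := by
        have h1 : a * (1 + T ^ 2) / (1 + (a * T) ^ 2) ≤ max a (1 / a) := aux_ratio a T ha0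
        have h2 : vbar m * (a * (1 + T ^ 2) / (1 + (a * T) ^ 2)) ≤ vbar m * max a (1 / a) :=
          mul_le_mul_of_nonneg_left h1 hvm.le
        refine h2.trans (le_of_eq ?_)
        rw [mul_max_of_nonneg _ _ hvm.le]
        congr 1
        · rw [hadef]; ring
        · rw [hadef]
          field_simp
      rw [hr m hmm]
      calc |v| = (vbar m * (a * (1 + T ^ 2) / (1 + (a * T) ^ 2))) * |dθ| := by
            rw [hveq, abs_neg, abs_mul, abs_of_nonneg hK0]
        _ ≤ max (π * vbar m / (2 * c m)) (2 * vbar m * c m / π)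
              * (φ m / q m + μ m * (p m - q m) / p m) :=
            mul_le_mul hKle hdθb (abs_nonneg _) (le_trans hK0 hKle)
        _ = (φ m / q m + μ m * (p m - q m) / p m)
              * max (π * vbar m / (2 * c m)) (2 * vbar m * c m / π) := by ring
  intro t htt i hi
  obtain ⟨v, hv, hvb⟩ := key i (Finset.mem_Icc.mp hi).2 t htt
  rw [hv.deriv]
  exact hvb
end
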